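/- For p₀(r) = ((3-ln 2)/(4(ln 2)²)) ln(r) + (1+ln 2)/(4 ln 2) + (r² ln(r/2) - r²)/(4 ln 2), the derivative at r=1 is p₀'(1) = 3/(4 (ln 2)²) - 1/(2 ln 2) - 1/2, and the quantity μ'(0) := -1 + 2 p₀'(1) = -2 + 3/(2(ln 2)²) - 1/ln(2) satisfies μ'(0) < -3/10. -/

import Mathlib

open Real

theorem stmt3 (p₀ : ℝ → ℝ)
    (hdef : ∀ r : ℝ, p₀ r =
      ((3 - Real.log 2) / (4 * (Real.log 2)^2)) * Real.log r
      + (1 + Real.log 2) / (4 * Real.log 2)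
      + (r^2 * Real.log (r/2) - r^2) / (4 * Real.log 2)) :
    deriv p₀ 1 = 3 / (4 * (Real.log 2)^2) - 1 / (2 * Real.log 2) - 1/2 ∧
    -1 + 2 * deriv p₀ 1 = -2 + 3 / (2 * (Real.log 2)^2) - 1 / Real.log 2 ∧
    -1 + 2 * deriv p₀ 1 < -3/10 := by
  have L2 : Real.log 2 ≠ 0 := by
    have := Real.log_two_gt_d9; linarith
  have hfun : p₀ = fun r : ℝ =>
      ((3 - Real.log 2) / (4 * (Real.log 2)^2)) * Real.log r
      + (1 + Real.log 2) / (4 * Real.log 2)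
      + (r^2 * Real.log (r/2) - r^2) / (4 * Real.log 2) := funext hdef
  have h1 : HasDerivAt (fun r : ℝ => Real.log r) 1 1 := by
    simpa using Real.hasDerivAt_log one_ne_zero
  have h2 : HasDerivAt (fun r : ℝ => r / 2) (1/2) 1 := by
    simpa using (hasDerivAt_id (1:ℝ)).div_const 2
  have h3 : HasDerivAt (fun r : ℝ => Real.log (r/2)) 1 1 := by
    have := h2.log (by norm_num)
    simpa using this
  have h4 : HasDerivAt (fun r : ℝ => r^2) 2 1 := by
    simpa using hasDerivAt_pow 2 (1:ℝ)
  have h5 : HasDerivAt (fun r : ℝ => r^2 * Real.log (r/2))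
      (2 * Real.log (1/2) + 1) 1 := by
    have := h4.fun_mul h3
    simpa using this
  have h6 : HasDerivAt p₀
      (((3 - Real.log 2) / (4 * (Real.log 2)^2)) * 1
        + ((2 * Real.log (1/2) + 1) - 2) / (4 * Real.log 2)) 1 := by
    rw [hfun]
    exact ((h1.const_mul _).add_const _).add ((h5.sub h4).div_const _)
  have hd : deriv p₀ 1 = 3 / (4 * (Real.log 2)^2) - 1 / (2 * Real.log 2) - 1/2 := by
    rw [h6.deriv]
    rw [one_div, Real.log_inv]
    field_simp
    ring
  refine ⟨hd, ?_, ?_⟩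
  · rw [hd]; field_simp; ring
  · rw [hd]
    have hlo := Real.log_two_gt_d9
    have hhi := Real.log_two_lt_d9
    have hpos : (0:ℝ) < Real.log 2 := by linarith
    have ha : Real.log 2 * (1 / Real.log 2) = 1 := mul_one_div_cancel L2
    have hb : Real.log 2 ^ 2 * (1 / Real.log 2 ^ 2) = 1 :=
      mul_one_div_cancel (pow_ne_zero 2 L2)
    have e1 : 3 / (4 * Real.log 2 ^ 2) = (3/4) * (1 / Real.log 2 ^ 2) := by ring
    have e2 : 1 / (2 * Real.log 2) = (1/2) * (1 / Real.log 2) := by ring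
    rw [e1, e2]
    nlinarith [sq_nonneg (1 / Real.log 2 - 1.4426950409), sq_nonneg (1/Real.log 2),
      mul_pos hpos hpos]
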